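/- Let n ≥ 1 and let w_1, …, w_n be complex numbers with e_k(w_1, …, w_n) = 1/k! for k = 1, …, n. Then there exist constants C > 0 and δ > 0 such that for all complex z with |z| ≤ δ (so small that every factor 1 − w_i z is nonzero), |∏_{i=1}^n (1 − w_i·z)^{-1} − e^{z}| ≤ C·|z|^{n+1}; i.e., the n-step complex backward Euler method along the same path as the n-th order forward Euler path is n-th order accurate for ẏ = λy, matching the (0,n) Padé approximant of the exponential. -/

import Mathlib

/-- Let `n ≥ 1` and let `w 1, …, w n` be complex numbers with `e_k(w) = 1/k!` for
`k = 1, …, n`. Then there are `C > 0` and `δ > 0` such that for all `z : ℂ` with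
`|z| ≤ δ`, every factor `1 − w i z` is nonzero and
`|(∏ i, (1 − w i z))⁻¹ − e^z| ≤ C |z|^{n+1}`: the `n`-step complex backward Euler
method along the same path is `n`-th order accurate for `ẏ = λy`, matching the
(0,n) Padé approximant of the exponential. -/
theorem backward_euler_complex_path_accuracy (n : ℕ) (hn : 1 ≤ n) (w : Fin n → ℂ)
    (hesymm : ∀ k : ℕ, 1 ≤ k → k ≤ n →
      ∑ s ∈ Finset.univ.powersetCard k, ∏ i ∈ s, w i = 1 / (Nat.factorial k : ℂ)) :
    ∃ C > (0 : ℝ), ∃ δ > (0 : ℝ), ∀ z : ℂ, ‖z‖ ≤ δ →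
      (∀ i, 1 - w i * z ≠ 0) ∧
      ‖(∏ i, (1 - w i * z))⁻¹ - Complex.exp z‖ ≤ C * ‖z‖ ^ (n + 1) := by
  classical
  -- the product is the truncated exponential series at -z
  have hP : ∀ z : ℂ, ∏ i, (1 - w i * z)
      = ∑ k ∈ Finset.range (n+1), (-z)^k / (Nat.factorial k : ℂ) := by
    intro z
    have h1 : ∀ i ∈ (Finset.univ : Finset (Fin n)), 1 - w i * z = -(w i * z) + 1 :=
      fun i _ => by ring
    rw [Finset.prod_congr rfl h1, Finset.prod_add]
    rw [Finset.sum_powerset]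
    simp only [Finset.card_univ, Fintype.card_fin, Finset.prod_const_one, mul_one]
    refine Finset.sum_congr rfl fun k hk => ?_
    have hterm : ∀ t ∈ Finset.univ.powersetCard k,
        (∏ i ∈ t, -(w i * z)) = (-z)^k * ∏ i ∈ t, w i := by
      intro t ht
      have hc : t.card = k := (Finset.mem_powersetCard.mp ht).2
      calc (∏ i ∈ t, -(w i * z)) = ∏ i ∈ t, ((-z) * w i) :=
            Finset.prod_congr rfl fun i _ => by ring
        _ = (-z)^k * ∏ i ∈ t, w i := by rw [Finset.prod_mul_distrib, Finset.prod_const, hc]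
    rw [Finset.sum_congr rfl hterm, ← Finset.mul_sum]
    rcases Nat.eq_zero_or_pos k with hk0 | hk1
    · subst hk0; simp
    · rw [hesymm k hk1 (Nat.lt_succ_iff.mp (Finset.mem_range.mp hk)), mul_one_div]
  set B : ℝ := ((n:ℝ) + 2) * (((n+1).factorial : ℝ) * ((n:ℝ) + 1))⁻¹ with hB
  have hBpos : 0 < B := by positivity
  refine ⟨2 * Real.exp 1 * B, by positivity, min 1 (1 / (2 * (1 + B))), by positivity, ?_⟩
  intro z hz
  have hz1 : ‖z‖ ≤ 1 := le_trans hz (min_le_left _ _)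
  have hz2 : ‖z‖ ≤ 1 / (2 * (1 + B)) := le_trans hz (min_le_right _ _)
  -- tail bound from exp_bound at -z
  have hR : ‖Complex.exp (-z) - ∏ i, (1 - w i * z)‖ ≤ B * ‖z‖ ^ (n + 1) := by
    have h := Complex.exp_bound (x := -z) (by simpa using hz1) (n := n + 1) (Nat.succ_pos n)
    rw [hP z]
    calc ‖Complex.exp (-z) - ∑ k ∈ Finset.range (n+1), (-z)^k / (Nat.factorial k : ℂ)‖
        = ‖Complex.exp (-z) - ∑ m ∈ Finset.range (n+1), (-z)^m / (Nat.factorial m : ℂ)‖ := rfl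
      _ ≤ ‖-z‖ ^ (n+1) * (((n+1).succ : ℝ) * (((n+1).factorial : ℝ) * ((n+1 : ℕ) : ℝ))⁻¹) := h
      _ = B * ‖z‖ ^ (n + 1) := by
          rw [norm_neg]
          have : ((n+1).succ : ℝ) = (n:ℝ) + 2 := by push_cast; ring
          rw [this]
          have : (((n+1 : ℕ)) : ℝ) = (n:ℝ) + 1 := by push_cast; ring
          rw [this, ← hB]
          rw [mul_comm]
  set P : ℂ := ∏ i, (1 - w i * z) with hPdef
  -- lower bound on ‖P‖
  have hPlow : (1:ℝ)/2 ≤ ‖P‖ := by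
    have h1 : (1:ℝ) - ‖z‖ ≤ ‖Complex.exp (-z)‖ := by
      have hne : ‖Complex.exp (-z)‖ = Real.exp (-z).re := by
        rw [Complex.norm_exp]
      rw [hne]
      have h2 : -‖z‖ ≤ (-z).re := by
        have habs := Complex.abs_re_le_norm (-z)
        rw [abs_le] at habs
        simpa using habs.1
      calc (1:ℝ) - ‖z‖ ≤ Real.exp (-‖z‖) := by
            have := Real.add_one_le_exp (-‖z‖); linarith
        _ ≤ Real.exp (-z).re := Real.exp_le_exp.mpr h2
    have h3 : ‖Complex.exp (-z) - P‖ ≤ B * ‖z‖ := by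
      refine hR.trans ?_
      have : ‖z‖ ^ (n+1) ≤ ‖z‖ := by
        calc ‖z‖ ^ (n+1) ≤ ‖z‖ ^ 1 := pow_le_pow_of_le_one (norm_nonneg z) hz1 (by omega)
          _ = ‖z‖ := pow_one _
      nlinarith [hBpos.le]
    have h4 : ‖Complex.exp (-z)‖ - ‖Complex.exp (-z) - P‖ ≤ ‖P‖ := by
      have := norm_sub_norm_le (Complex.exp (-z)) (Complex.exp (-z) - P)
      simpa using this
    have h5 : (1 + B) * ‖z‖ ≤ 1/2 := by
      have h1B : (0:ℝ) < 1 + B := by positivity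
      have hm := mul_le_mul_of_nonneg_left hz2 h1B.le
      have heq : (1+B) * (1/(2*(1+B))) = 1/2 := by field_simp
      rw [heq] at hm; exact hm
    nlinarith [norm_nonneg z, hBpos]
  have hPne : P ≠ 0 := by
    intro h; rw [h, norm_zero] at hPlow; linarith
  constructor
  · intro i hi
    exact hPne (Finset.prod_eq_zero (Finset.mem_univ i) hi)
  -- main bound
  have hkey : P⁻¹ - Complex.exp z = (Complex.exp (-z) - P) * Complex.exp z / P := by
    field_simp
    rw [mul_sub, ← Complex.exp_add, add_neg_cancel, Complex.exp_zero]; ring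
  rw [hkey]
  rw [norm_div, norm_mul]
  have hexp : ‖Complex.exp z‖ ≤ Real.exp 1 := by
    have hne : ‖Complex.exp z‖ = Real.exp z.re := by
      rw [Complex.norm_exp]
    rw [hne]
    exact Real.exp_le_exp.mpr ((Complex.re_le_norm z).trans hz1)
  calc ‖Complex.exp (-z) - P‖ * ‖Complex.exp z‖ / ‖P‖
      ≤ (B * ‖z‖ ^ (n+1)) * Real.exp 1 / (1/2) := by
        apply div_le_div₀ (by positivity) (mul_le_mul hR hexp (norm_nonneg _) (by positivity)) (by norm_num) hPlow
    _ = 2 * Real.exp 1 * B * ‖z‖ ^ (n+1) := by ring
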